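/- If v is locally bounded on G and dim H^∞_v(G) ≥ 2, then H^∞_v(G) separates the points of G: for any distinct z_1, z_2 ∈ G there exists f ∈ H^∞_v(G) with f(z_1) ≠ f(z_2). -/

import Mathlib

open Complex Metric Set Filter Topology MeasureTheory

noncomputable section

/-- `f` is holomorphic on `G` and `sup_{z in G} v z * |f z| < ∞`. -/
def MemHv (G : Set ℂ) (v : ℂ → ℝ) (f : ℂ → ℂ) : Prop :=
  DifferentiableOn ℂ f G ∧ ∃ C : ℝ, ∀ z ∈ G, v z * ‖f z‖ ≤ C

/-- The weighted sup-seminorm `‖f‖_v`. -/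
def HvNorm (G : Set ℂ) (v : ℂ → ℝ) (f : ℂ → ℂ) : ℝ :=
  sSup ((fun z => v z * ‖f z‖) '' G)

/-- A `‖·‖_v`-Cauchy sequence. -/
def HvCauchy (G : Set ℂ) (v : ℂ → ℝ) (F : ℕ → ℂ → ℂ) : Prop :=
  ∀ ε : ℝ, 0 < ε → ∃ N : ℕ, ∀ m ≥ N, ∀ n ≥ N, ∀ z ∈ G,
    v z * ‖F m z - F n z‖ ≤ ε

/-- Convergence in the `‖·‖_v`-seminorm. -/
def HvTendsto (G : Set ℂ) (v : ℂ → ℝ) (F : ℕ → ℂ → ℂ) (f : ℂ → ℂ) : Prop :=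
  ∀ ε : ℝ, 0 < ε → ∃ N : ℕ, ∀ n ≥ N, ∀ z ∈ G,
    v z * ‖F n z - f z‖ ≤ ε

/-- Completeness of `H^∞_v(G)`: every Cauchy sequence converges in the space. -/
def HvComplete (G : Set ℂ) (v : ℂ → ℝ) : Prop :=
  ∀ F : ℕ → ℂ → ℂ, (∀ n, MemHv G v (F n)) → HvCauchy G v F →
    ∃ f : ℂ → ℂ, MemHv G v f ∧ HvTendsto G v F f

/-- The seminorm `‖·‖_v` is a norm: `‖f‖_v = 0` forces `f = 0` on `G`. -/
def HvNormed (G : Set ℂ) (v : ℂ → ℝ) : Prop :=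
  ∀ f : ℂ → ℂ, MemHv G v f → (∀ z ∈ G, v z * ‖f z‖ = 0) →
    ∀ z ∈ G, f z = 0

/-- `H^∞_v(G)` is a Banach space. -/
def IsBanachHv (G : Set ℂ) (v : ℂ → ℝ) : Prop :=
  HvNormed G v ∧ HvComplete G v

/-- If `h ∈ H^∞_v(G)` vanishes at `z1` and `v` is bounded near `z1`, then the difference
quotient `dslope h z1` also belongs to `H^∞_v(G)`. -/
lemma dslope_memHv {G : Set ℂ} {v : ℂ → ℝ} (hG : IsOpen G) (hv : ∀ z ∈ G, 0 ≤ v z)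
    {h : ℂ → ℂ} {z1 : ℂ} (hz1 : z1 ∈ G)
    (hr : ∃ r > (0:ℝ), Metric.ball z1 r ⊆ G ∧ ∃ M : ℝ, ∀ ζ ∈ Metric.ball z1 r, v ζ ≤ M)
    (hh : MemHv G v h) (h0 : h z1 = 0) : MemHv G v (dslope h z1) := by
  have hdiff : DifferentiableOn ℂ (dslope h z1) G := by
    intro z hz
    rcases eq_or_ne z z1 with rfl | hne
    · obtain ⟨p, hp⟩ := hh.1.analyticAt (hG.mem_nhds hz)
      have ha : AnalyticAt ℂ (dslope h z) z := ⟨p.fslope, hp.has_fpower_series_dslope_fslope⟩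
      exact ha.differentiableAt.differentiableWithinAt
    · exact (differentiableWithinAt_dslope_of_ne hne).mpr (hh.1 z hz)
  obtain ⟨r, hr0, hball, M, hM⟩ := hr
  obtain ⟨C, hC⟩ := hh.2
  have hC0 : 0 ≤ C := by
    have := hC z1 hz1
    rw [h0] at this
    simpa using this
  have hsub : Metric.closedBall z1 (r/2) ⊆ G :=
    (Metric.closedBall_subset_ball (by linarith)).trans hball
  obtain ⟨K, hK⟩ := (isCompact_closedBall z1 (r/2)).exists_bound_of_continuousOn
    (hdiff.continuousOn.mono hsub)
  have hM0 : 0 ≤ M := le_trans (hv z1 hz1) (hM z1 (Metric.mem_ball_self hr0))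
  refine ⟨hdiff, max (M * K) (C / (r/2)), fun z hz => ?_⟩
  rcases le_or_gt (dist z z1) (r/2) with hle | hgt
  · have h1 : v z ≤ M := hM z (Metric.mem_ball.mpr (lt_of_le_of_lt hle (by linarith)))
    have h2 : ‖dslope h z1 z‖ ≤ K := by
      simpa using hK z (Metric.mem_closedBall.mpr hle)
    refine le_trans (mul_le_mul h1 h2 (norm_nonneg _) hM0) (le_max_left _ _)
  · have hne : z ≠ z1 := by
      intro e; subst e; simp only [dist_self] at hgt; linarith
    have hd : ‖z - z1‖ > r/2 := by
      rwa [← Complex.dist_eq]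
    rw [dslope_of_ne _ hne, slope_def_field, h0, sub_zero, norm_div]
    have : v z * (‖h z‖ / ‖z - z1‖)
        = (v z * ‖h z‖) / ‖z - z1‖ := by ring
    rw [this]
    refine le_trans (div_le_div₀ hC0 (hC z hz) (by linarith) hd.le) (le_max_right _ _)

/-- Key step: if no function in `H^∞_v(G)` separates `z1` and `z2`, then any member
vanishing at `z1` vanishes identically on `G`. -/
lemma eq_zero_of_not_sep {G : Set ℂ} {v : ℂ → ℝ} (hG : IsOpen G) (hGc : IsConnected G)
    (hv : ∀ z ∈ G, 0 ≤ v z)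
    (hlb : ∀ z ∈ G, ∃ r > (0:ℝ), Metric.ball z r ⊆ G ∧
      ∃ M : ℝ, ∀ ζ ∈ Metric.ball z r, v ζ ≤ M)
    {z1 z2 : ℂ} (hz1 : z1 ∈ G) (hz2 : z2 ∈ G) (hne : z1 ≠ z2)
    (hsep : ∀ p : ℂ → ℂ, MemHv G v p → p z1 = p z2)
    {h : ℂ → ℂ} (hh : MemHv G v h) (h0 : h z1 = 0) : ∀ z ∈ G, h z = 0 := by
  set H : ℕ → ℂ → ℂ := fun n => (Function.swap dslope z1)^[n] h with hH
  have key : ∀ n, MemHv G v (H n) ∧ H n z1 = 0 := by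
    intro n
    induction n with
    | zero => exact ⟨hh, h0⟩
    | succ n ih =>
      have hstep : H (n+1) = dslope (H n) z1 := Function.iterate_succ_apply' _ _ _
      have hmem : MemHv G v (H (n+1)) := by
        rw [hstep]
        exact dslope_memHv hG hv hz1 (hlb z1 hz1) ih.1 ih.2
      refine ⟨hmem, ?_⟩
      have hz2v : H n z2 = 0 := (hsep _ ih.1) ▸ ih.2
      have h2 : H (n+1) z2 = 0 := by
        rw [hstep, dslope_of_ne _ hne.symm, slope_def_field, ih.2, hz2v]
        simp
      rw [hsep _ hmem, h2]
  obtain ⟨p, hp⟩ := hh.1.analyticAt (hG.mem_nhds hz1)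
  rcases eq_or_ne p 0 with rfl | hpne
  · have hev : ∀ᶠ z in 𝓝 z1, h z = 0 := hp.locally_zero_iff.mpr rfl
    have hEq : Set.EqOn h 0 G := by
      refine (hh.1.analyticOnNhd hG).eqOn_zero_of_preconnected_of_eventuallyEq_zero
        hGc.isPreconnected hz1 ?_
      filter_upwards [hev] with z hz
      simpa using hz
    exact fun z hz => hEq hz
  · exact absurd (key p.order).2 (hp.iterate_dslope_fslope_ne_zero hpne)

theorem stmt8 (G : Set ℂ) (v : ℂ → ℝ) (hG : IsOpen G) (hGc : IsConnected G)
    (hv : ∀ z ∈ G, 0 ≤ v z)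
    (hlb : ∀ z ∈ G, ∃ r > (0:ℝ), Metric.ball z r ⊆ G ∧
      ∃ M : ℝ, ∀ ζ ∈ Metric.ball z r, v ζ ≤ M)
    (hdim : ∃ f g : ℂ → ℂ, MemHv G v f ∧ MemHv G v g ∧
      ∀ a b : ℂ, (∀ z ∈ G, a * f z + b * g z = 0) → a = 0 ∧ b = 0) :
    ∀ z1 ∈ G, ∀ z2 ∈ G, z1 ≠ z2 → ∃ f : ℂ → ℂ, MemHv G v f ∧ f z1 ≠ f z2 := by
  intro z1 hz1 z2 hz2 hne
  by_contra hcon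
  push_neg at hcon
  have hsep : ∀ p : ℂ → ℂ, MemHv G v p → p z1 = p z2 := hcon
  obtain ⟨f, g, hf, hg, hind⟩ := hdim
  set F : ℂ → ℂ := fun z => g z1 * f z + (-(f z1)) * g z with hFdef
  have hFmem : MemHv G v F := by
    constructor
    · exact ((differentiableOn_const _).mul hf.1).add ((differentiableOn_const _).mul hg.1)
    · obtain ⟨Cf, hCf⟩ := hf.2
      obtain ⟨Cg, hCg⟩ := hg.2
      refine ⟨‖g z1‖ * Cf + ‖f z1‖ * Cg, fun z hz => ?_⟩
      have h1 : ‖F z‖ ≤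
          ‖g z1‖ * ‖f z‖ + ‖f z1‖ * ‖g z‖ := by
        show ‖g z1 * f z + (-(f z1)) * g z‖ ≤ _
        simpa [norm_mul, norm_neg, neg_mul] using norm_add_le (g z1 * f z) ((-(f z1)) * g z)
      calc v z * ‖F z‖
          ≤ v z * (‖g z1‖ * ‖f z‖
              + ‖f z1‖ * ‖g z‖) :=
            mul_le_mul_of_nonneg_left h1 (hv z hz)
        _ = ‖g z1‖ * (v z * ‖f z‖)
              + ‖f z1‖ * (v z * ‖g z‖) := by ring
        _ ≤ ‖g z1‖ * Cf + ‖f z1‖ * Cg :=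
            add_le_add (mul_le_mul_of_nonneg_left (hCf z hz) (norm_nonneg _))
              (mul_le_mul_of_nonneg_left (hCg z hz) (norm_nonneg _))
  have hF0 : F z1 = 0 := by simp [hFdef]; ring
  have hFzero := eq_zero_of_not_sep hG hGc hv hlb hz1 hz2 hne hsep hFmem hF0
  have hcoef := hind (g z1) (-(f z1)) (fun z hz => hFzero z hz)
  have hfz1 : f z1 = 0 := by
    have := hcoef.2
    simpa using this
  have hfzero := eq_zero_of_not_sep hG hGc hv hlb hz1 hz2 hne hsep hf hfz1
  have := hind 1 0 (fun z hz => by simp [hfzero z hz])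
  exact one_ne_zero this.1
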